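/- Let a be a nonzero integer with 1 ≤ |a| ≤ y, and let s₁, s₂ be complex numbers with Re s₁ > 0 and Re s₂ > 1. Then F_a(s₁,s₂;y) = F₁(s₁,s₂;y) · ψ₂(s₁,s₂;a), where F₁(s₁,s₂;y) = ζ(s₁,y) · ∏_{p > y} ( 1 + 1/((1 − 1/p)(p^{s₂+1} − 1)) ) · ∏_{p ≤ y} ( 1 + (1 − p^{−s₁})/((1 − 1/p)(p^{s₂+1} − 1)) ) and ψ₂(s₁,s₂;a) = g_a(s₂+1) · ∏_{p | a} ( 1 + (1 − p^{1−s₁})/((1 − 1/p) p^{s₂+2}) )^{−1}, the products over p being over primes. -/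

import Mathlib

open Real Complex Finset MeasureTheory
open scoped BigOperators Topology Classical

noncomputable section

/-- Largest prime factor of `n`, with the convention `P(1) = 1`. -/
def Pmax (n : ℕ) : ℕ := max 1 (n.primeFactors.sup id)

/-- The finite set `S(x,y)` of `y`-friable positive integers up to `x`. -/
def Sxy (x y : ℝ) : Finset ℕ :=
  (Finset.Icc 1 ⌊x⌋₊).filter fun n : ℕ => (Pmax n : ℝ) ≤ y

/-- `Ψ(x,y)` -/
def Psi (x y : ℝ) : ℕ := (Sxy x y).card

/-- `Ψ(x,y;a,q)` -/
def PsiMod (x y : ℝ) (a : ℤ) (q : ℕ) : ℕ :=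
  ((Sxy x y).filter fun n : ℕ => (n : ℤ) ≡ a [ZMOD (q : ℤ)]).card

/-- indicator of `a ∈ S(x,y)` -/
def indS (x y : ℝ) (a : ℤ) : ℕ :=
  if 1 ≤ a ∧ (a : ℝ) ≤ x ∧ (Pmax a.toNat : ℝ) ≤ y then 1 else 0

/-- `Ψ*(x,y;a,q)` -/
def PsiStar (x y : ℝ) (a : ℤ) (q : ℕ) : ℝ :=
  (PsiMod x y a q : ℝ) - (indS x y a : ℝ)

/-- `Ψ_q(x,y)` -/
def PsiCop (x y : ℝ) (q : ℕ) : ℕ :=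
  ((Sxy x y).filter fun n : ℕ => n.Coprime q).card

/-- `E*(x,y;a,q)` for `gcd(a,q) = 1` -/
def Estar (x y : ℝ) (a : ℤ) (q : ℕ) : ℝ :=
  PsiStar x y a q - (PsiCop x y q : ℝ) / (q.totient : ℝ)

/-- `E*(x,y;a,q)` for general `q`, with `d = gcd(|a|,q)` -/
def EstarGen (x y : ℝ) (a : ℤ) (q : ℕ) : ℝ :=
  PsiStar x y a q -
    (PsiCop (x / (a.natAbs.gcd q : ℝ)) y (q / a.natAbs.gcd q) : ℝ) /
      ((q / a.natAbs.gcd q).totient : ℝ)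

/-- `σ(x,y,M;a)` -/
def sigmaS (x y M : ℝ) (a : ℤ) : ℝ :=
  ∑ q ∈ (Finset.Icc 1 ⌊x / M⌋₊).filter (fun q : ℕ => q.Coprime a.natAbs), Estar x y a q

/-- `H(u) = exp(u/(log(u+1))²)` -/
def Hf (u : ℝ) : ℝ := Real.exp (u / (Real.log (u + 1)) ^ 2)

/-- `L_ε(M) = exp((log M)^{3/5-ε})` -/
def Lf (ε M : ℝ) : ℝ := Real.exp ((Real.log M) ^ ((3 : ℝ) / 5 - ε))

/-- divisor function `τ` -/
def tau (n : ℕ) : ℕ := n.divisors.card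

/-- 3-fold divisor function `τ₃ = 1 * 1 * 1` -/
def tau3 (n : ℕ) : ℕ := ∑ d ∈ n.divisors, tau (n / d)

/-- 4-fold divisor function `τ₄ = 1 * τ₃` -/
def tau4 (n : ℕ) : ℕ := ∑ d ∈ n.divisors, tau3 (n / d)

/-- the Dickman function -/
def IsDickman (ρ : ℝ → ℝ) : Prop :=
  ContinuousOn ρ (Set.Ioi 0) ∧ (∀ v : ℝ, 0 < v → v ≤ 1 → ρ v = 1) ∧
    ∀ v : ℝ, 1 < v → HasDerivAt ρ (-ρ (v - 1) / v) v

/-- `α` is the saddle point `α(x,y)` -/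
def IsSaddle (x y α : ℝ) : Prop :=
  0 < α ∧
    ∑ p ∈ (Finset.range (⌊y⌋₊ + 1)).filter Nat.Prime,
      Real.log p / ((p : ℝ) ^ α - 1) = Real.log x

/-- `ζ(s,y)`, the `y`-friable part of the Riemann zeta function -/
def zetaY (s : ℂ) (y : ℝ) : ℂ :=
  ∑' n : ℕ, if 1 ≤ n ∧ (Pmax n : ℝ) ≤ y then (n : ℂ) ^ (-s) else 0

/-- `Φ₂(s;a) = Σ_{(n,a)=1} 1/(φ(n) n^s)` -/
def Phi2 (s : ℂ) (a : ℤ) : ℂ :=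
  ∑' n : ℕ, if 1 ≤ n ∧ n.Coprime a.natAbs then
    1 / ((n.totient : ℂ) * (n : ℂ) ^ s) else 0

/-- `F_a(s₁,s₂;y)` -/
def Fa (a : ℤ) (s₁ s₂ : ℂ) (y : ℝ) : ℂ :=
  ∑' n : ℕ, if 1 ≤ n ∧ (Pmax n : ℝ) ≤ y then (n : ℂ) ^ (-s₁) * Phi2 s₂ (a * n) else 0

/-- `g_m(s) = ∏_{p ∣ m} (1 - p^{-s})` -/
def gI (m : ℤ) (s : ℂ) : ℂ := ∏ p ∈ m.natAbs.primeFactors, (1 - (p : ℂ) ^ (-s))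

/-- `F₁(s₁,s₂;y)` -/
def F1 (s₁ s₂ : ℂ) (y : ℝ) : ℂ :=
  zetaY s₁ y *
    (∏' p : Nat.Primes, if y < ((p : ℕ) : ℝ) then
      1 + 1 / ((1 - 1 / ((p : ℕ) : ℂ)) * (((p : ℕ) : ℂ) ^ (s₂ + 1) - 1)) else 1) *
    (∏' p : Nat.Primes, if ((p : ℕ) : ℝ) ≤ y then
      1 + (1 - ((p : ℕ) : ℂ) ^ (-s₁)) /
        ((1 - 1 / ((p : ℕ) : ℂ)) * (((p : ℕ) : ℂ) ^ (s₂ + 1) - 1)) else 1)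

/-- `ψ₂(s₁,s₂;a)` -/
def psi2 (s₁ s₂ : ℂ) (a : ℤ) : ℂ :=
  gI a (s₂ + 1) *
    ∏ p ∈ a.natAbs.primeFactors,
      (1 + (1 - (p : ℂ) ^ ((1 : ℂ) - s₁)) / ((1 - 1 / (p : ℂ)) * (p : ℂ) ^ (s₂ + 2)))⁻¹

/-- `K_a(s₁,s₂)` -/
def Ka (s₁ s₂ : ℂ) (a : ℤ) : ℂ :=
  gI a s₁ / gI a (s₁ + s₂) *
    ∏ p ∈ a.natAbs.primeFactors,
      (1 + (1 - (p : ℂ) ^ (-s₂)) / (p : ℂ) ^ ((a.natAbs.factorization p : ℂ) * (s₁ + s₂)) *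
        (1 / ((p : ℂ) ^ s₁ - 1) -
          (1 - (p : ℂ) ^ (-s₁ - s₂)) / (((p : ℂ) - 1) * (1 - (p : ℂ) ^ (-s₂ - 1)))))

/-- `ψ₁(s₁,s₂;a) = ψ₂(s₁,s₂;a) K_a(s₁,s₂)` -/
def psi1 (s₁ s₂ : ℂ) (a : ℤ) : ℂ := psi2 s₁ s₂ a * Ka s₁ s₂ a

/-- `H₁(s₁,s₂;y)` -/
def H1 (s₁ s₂ : ℂ) (y : ℝ) : ℂ :=
  (∏' p : Nat.Primes, if y < ((p : ℕ) : ℝ) then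
    1 + (1 - ((p : ℕ) : ℂ) ^ (s₂ + 1)) /
      (((p : ℕ) : ℂ) ^ (s₂ + 3) * (1 - 1 / ((p : ℕ) : ℂ))) else 1) *
  (∏' p : Nat.Primes, if ((p : ℕ) : ℝ) ≤ y then
    1 - (((p : ℕ) : ℂ) ^ (-s₂ - 2) + ((p : ℕ) : ℂ) ^ (-s₁) -
        ((p : ℕ) : ℂ) ^ (-s₁ - s₂ - 1) - 1 / ((p : ℕ) : ℂ)) /
      (((p : ℕ) : ℂ) ^ (s₂ + 2) * (1 - 1 / ((p : ℕ) : ℂ)) *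
        (1 - ((p : ℕ) : ℂ) ^ (-s₁ - s₂ - 1))) else 1)

/-- `r_y`, the `y`-friable part of `r` -/
def friPart (y : ℝ) (r : ℕ) : ℕ :=
  ∏ p ∈ r.primeFactors.filter (fun p : ℕ => (p : ℝ) ≤ y), p ^ r.factorization p

/-- `G_a(s₁,s₂;y)` -/
def Ga (a : ℤ) (s₁ s₂ : ℂ) (y : ℝ) : ℂ :=
  ∑ k ∈ a.natAbs.divisors,
    ∑ ℓ ∈ k.divisors.filter (fun ℓ : ℕ => ℓ.Coprime (a / (k : ℤ)).natAbs),
      ((ArithmeticFunction.moebius ℓ : ℤ) : ℂ) / (ℓ.totient : ℂ) *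
        ∑' r : ℕ, if 1 ≤ r ∧ r.Coprime (a / (k : ℤ)).natAbs then
          (ℓ.totient : ℂ) / (((r * ℓ).totient : ℂ) * ((r * k : ℕ) : ℂ) ^ s₂) *
            (gI (((a / (k : ℤ)).natAbs * friPart y r * ℓ : ℕ) : ℤ) s₁ / ((k : ℕ) : ℂ) ^ s₁) *
            zetaY s₁ y
        else 0

/-- `G̃_a(s₁,s₂;y) = G_a(s₁,s₂;y) ζ(s₁+s₂+1,y)/ζ(s₁+s₂+1)` -/
def GaTilde (a : ℤ) (s₁ s₂ : ℂ) (y : ℝ) : ℂ :=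
  Ga a s₁ s₂ y * zetaY (s₁ + s₂ + 1) y / riemannZeta (s₁ + s₂ + 1)

/-- `σ₁(x,y,M;a)` -/
def sigma1 (x y M : ℝ) (a : ℤ) : ℝ :=
  ∑ q ∈ (Finset.Icc 1 ⌊x⌋₊).filter (fun q : ℕ => x / M < (q : ℝ) ∧ q.Coprime a.natAbs),
    PsiStar x y a q

/-- `σ̃₁(x,y,M;a)` -/
def sigma1T (x y M : ℝ) (a : ℤ) : ℝ :=
  ∑ k ∈ a.natAbs.divisors,
    ∑ ℓ ∈ k.divisors.filter (fun ℓ : ℕ => ℓ.Coprime (a / (k : ℤ)).natAbs),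
      ((ArithmeticFunction.moebius ℓ : ℤ) : ℝ) *
        ∑ r ∈ (Finset.Icc 1 ⌊M⌋₊).filter
            (fun r : ℕ => (r : ℝ) < M / (k : ℝ) ∧ r.Coprime (a / (k : ℤ)).natAbs),
          ((PsiCop (x / (k : ℝ)) y ((a / (k : ℤ)).natAbs * r * ℓ) : ℝ) -
            (PsiCop ((r : ℝ) * x / M) y ((a / (k : ℤ)).natAbs * r * ℓ) : ℝ)) /
            ((r * ℓ).totient : ℝ)

/-- `σ₂(x,y,M;a)` -/
def sigma2 (x y M : ℝ) (a : ℤ) : ℝ :=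
  ∑ q ∈ (Finset.Icc 1 ⌊x⌋₊).filter (fun q : ℕ => x / M < (q : ℝ) ∧ q.Coprime a.natAbs),
    (PsiCop x y q : ℝ) / (q.totient : ℝ)

/-- `I(x,y;M)` truncated at height `T`, with `α` the saddle point -/
def Iint (x y α T : ℝ) : ℂ :=
  (1 / (2 * (π : ℂ))) * ∫ τ in (-T)..T,
    zetaY ((α : ℂ) + (τ : ℂ) * Complex.I) y /
      (riemannZeta ((α : ℂ) + (τ : ℂ) * Complex.I) *
        (((α : ℂ) + (τ : ℂ) * Complex.I) - 1)) *
      (x : ℂ) ^ (((α : ℂ) + (τ : ℂ) * Complex.I) - 1)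

/-- `Φ_μ(x,y) = Σ_{n ≤ x, P⁻(n) > y} μ(n)/n` -/
def PhiMu (x y : ℝ) : ℝ :=
  ∑ n ∈ (Finset.Icc 1 ⌊x⌋₊).filter (fun n : ℕ => ∀ p : ℕ, p.Prime → p ∣ n → y < (p : ℝ)),
    ((ArithmeticFunction.moebius n : ℤ) : ℝ) / (n : ℝ)

/-- `ψ*(x;q,a) = Σ_{n ≤ x, n ≡ a (q), n ≠ a} Λ(n)` -/
def psiCheb (x : ℝ) (q : ℕ) (a : ℤ) : ℝ :=
  ∑ n ∈ (Finset.Icc 1 ⌊x⌋₊).filter (fun n : ℕ => (n : ℤ) ≡ a [ZMOD (q : ℤ)] ∧ (n : ℤ) ≠ a),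
    ArithmeticFunction.vonMangoldt n
namespace Stmt9

def Ep (s₂ : ℂ) (p : ℕ) : ℂ := 1 + 1 / ((1 - 1/(p:ℂ)) * ((p:ℂ)^(s₂+1) - 1))
def Dp (s₁ : ℂ) (p : ℕ) : ℂ := (1 - (p:ℂ)^(-s₁))⁻¹
def Ap (s₁ s₂ : ℂ) (p : ℕ) : ℂ :=
  1 + (1 - (p:ℂ)^(-s₁)) / ((1 - 1/(p:ℂ)) * ((p:ℂ)^(s₂+1) - 1))
def Bp (s₁ s₂ : ℂ) (p : ℕ) : ℂ :=
  1 + (1 - (p:ℂ)^((1:ℂ)-s₁)) / ((1 - 1/(p:ℂ)) * (p:ℂ)^(s₂+2))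

variable {s₁ s₂ : ℂ} {p : ℕ}

section PerPrime
variable (hp : p.Prime) (h1 : 0 < s₁.re) (h2 : 1 < s₂.re)

include hp

lemma hp2 : (2:ℝ) ≤ (p:ℝ) := by exact_mod_cast hp.two_le
lemma hp1R : (1:ℝ) < (p:ℝ) := by linarith [hp2 hp]
lemma hP0 : (p:ℂ) ≠ 0 := Nat.cast_ne_zero.mpr hp.pos.ne'

lemma norm_inv_p : ‖1/(p:ℂ)‖ ≤ 1/2 := by
  rw [norm_div, norm_one, Complex.norm_natCast]
  rw [div_le_div_iff₀ (by linarith [hp2 hp]) two_pos]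
  linarith [hp2 hp]

lemma hPm1 : (1 : ℂ) - 1/(p:ℂ) ≠ 0 := by
  intro h
  have h' : (1:ℂ)/(p:ℂ) = 1 := (sub_eq_zero.mp h).symm
  have h2 := norm_inv_p hp
  rw [h', norm_one] at h2
  linarith

lemma norm_hPm1 : (1:ℝ)/2 ≤ ‖(1 : ℂ) - 1/(p:ℂ)‖ := by
  calc (1:ℝ)/2 = ‖(1:ℂ)‖ - 1/2 := by simp; ring
  _ ≤ ‖(1:ℂ)‖ - ‖1/(p:ℂ)‖ := by linarith [norm_inv_p hp]
  _ ≤ ‖(1:ℂ) - 1/(p:ℂ)‖ := norm_sub_norm_le _ _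

include h2 in
lemma normZ : (4:ℝ) ≤ ‖(p:ℂ)^(s₂+1)‖ := by
  rw [Complex.norm_natCast_cpow_of_pos hp.pos]
  calc (4:ℝ) ≤ (p:ℝ)^(2:ℝ) := by
        rw [show ((2:ℝ)) = ((2:ℕ):ℝ) by norm_num, Real.rpow_natCast]
        nlinarith [hp2 hp]
    _ ≤ (p:ℝ)^((s₂+1).re) := by
        apply Real.rpow_le_rpow_of_exponent_le (by linarith [hp2 hp])
        simp [Complex.add_re]; linarith

include h2 in
lemma hZ1 : (p:ℂ)^(s₂+1) - 1 ≠ 0 := by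
  intro h
  have hn := normZ hp h2
  have h4 : ‖(p:ℂ)^(s₂+1)‖ ≤ ‖(p:ℂ)^(s₂+1) - 1‖ + ‖(1:ℂ)‖ := by
    calc ‖(p:ℂ)^(s₂+1)‖ = ‖((p:ℂ)^(s₂+1) - 1) + 1‖ := by ring_nf
    _ ≤ _ := norm_add_le _ _
  rw [h, norm_zero, norm_one] at h4; linarith

include h2 in
lemma hcNe : ((1 : ℂ) - 1/(p:ℂ)) * ((p:ℂ)^(s₂+1) - 1) ≠ 0 :=
  mul_ne_zero (hPm1 hp) (hZ1 hp h2)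

include h1 in
lemma normW : ‖(p:ℂ)^(-s₁)‖ < 1 := by
  rw [Complex.norm_natCast_cpow_of_pos hp.pos]
  apply Real.rpow_lt_one_of_one_lt_of_neg (hp1R hp)
  simp [h1]

include h1 in
lemma hWne : (1:ℂ) - (p:ℂ)^(-s₁) ≠ 0 := by
  intro h
  have h' : (p:ℂ)^(-s₁) = 1 := (sub_eq_zero.mp h).symm
  have := normW hp h1
  rw [h', norm_one] at this
  linarith

include h2 in
lemma key (w : ℂ) (hw : ‖w‖ ≤ 1) :
    ((1 : ℂ) - 1/(p:ℂ)) * ((p:ℂ)^(s₂+1) - 1) + 1 - w ≠ 0 := by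
  intro h
  have he : ((1 : ℂ) - 1/(p:ℂ)) * ((p:ℂ)^(s₂+1) - 1) + 1 - w
      = (1 - 1/(p:ℂ)) * (p:ℂ)^(s₂+1) + (1/(p:ℂ) - w) := by ring
  have hn : ‖(1 - 1/(p:ℂ)) * (p:ℂ)^(s₂+1)‖
      ≤ ‖(1 - 1/(p:ℂ)) * (p:ℂ)^(s₂+1) + (1/(p:ℂ) - w)‖ + ‖1/(p:ℂ) - w‖ := by
    calc ‖(1 - 1/(p:ℂ)) * (p:ℂ)^(s₂+1)‖
        = ‖((1 - 1/(p:ℂ)) * (p:ℂ)^(s₂+1) + (1/(p:ℂ) - w)) - (1/(p:ℂ) - w)‖ := by ring_nf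
    _ ≤ _ := norm_sub_le _ _
  rw [← he, h, norm_zero] at hn
  have hA : (2:ℝ) ≤ ‖(1 - 1/(p:ℂ)) * (p:ℂ)^(s₂+1)‖ := by
    rw [norm_mul]
    calc (2:ℝ) = (1/2) * 4 := by norm_num
    _ ≤ ‖(1:ℂ) - 1/(p:ℂ)‖ * ‖(p:ℂ)^(s₂+1)‖ := by
        apply mul_le_mul (norm_hPm1 hp) (normZ hp h2) (by norm_num)
          (norm_nonneg _)
  have hB : ‖1/(p:ℂ) - w‖ ≤ 3/2 := by
    calc ‖1/(p:ℂ) - w‖ ≤ ‖1/(p:ℂ)‖ + ‖w‖ := norm_sub_le _ _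
    _ ≤ 1/2 + 1 := add_le_add (norm_inv_p hp) hw
    _ = 3/2 := by norm_num
  linarith

include h2 in
lemma EpNe : Ep s₂ p ≠ 0 := by
  have h := key hp h2 0 (by simp)
  have : Ep s₂ p = (((1 : ℂ) - 1/(p:ℂ)) * ((p:ℂ)^(s₂+1) - 1) + 1 - 0)
      / (((1 : ℂ) - 1/(p:ℂ)) * ((p:ℂ)^(s₂+1) - 1)) := by
    rw [Ep, eq_div_iff (hcNe hp h2), add_mul, one_mul,
      div_mul_cancel₀ _ (hcNe hp h2)]; ring
  rw [this]
  exact div_ne_zero h (hcNe hp h2)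

include h1 h2 in
lemma ApNe : Ap s₁ s₂ p ≠ 0 := by
  have h := key hp h2 ((p:ℂ)^(-s₁)) (normW hp h1).le
  have : Ap s₁ s₂ p = (((1 : ℂ) - 1/(p:ℂ)) * ((p:ℂ)^(s₂+1) - 1) + 1 - (p:ℂ)^(-s₁))
      / (((1 : ℂ) - 1/(p:ℂ)) * ((p:ℂ)^(s₂+1) - 1)) := by
    rw [Ap, eq_div_iff (hcNe hp h2), add_mul, one_mul,
      div_mul_cancel₀ _ (hcNe hp h2)]; ring
  rw [this]
  exact div_ne_zero h (hcNe hp h2)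

include h2 in
lemma hZinv : (1:ℂ) - (p:ℂ)^(-(s₂+1)) ≠ 0 := by
  rw [Complex.cpow_neg]
  intro h
  have h1 : ((p:ℂ)^(s₂+1))⁻¹ = 1 := (sub_eq_zero.mp h).symm
  have h3 : (p:ℂ)^(s₂+1) = 1 := inv_eq_one.mp h1
  have h4 := normZ hp h2
  rw [h3, norm_one] at h4
  linarith

include h2 in
lemma BA : Bp s₁ s₂ p = Ap s₁ s₂ p * (1 - (p:ℂ)^(-(s₂+1))) := by
  have e1 : (p:ℂ)^(s₂+2) = (p:ℂ)^(s₂+1) * (p:ℂ) := by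
    rw [show s₂+2 = (s₂+1)+1 by ring, Complex.cpow_add _ _ (hP0 hp), Complex.cpow_one]
  have e2 : (p:ℂ)^((1:ℂ)-s₁) = (p:ℂ) * (p:ℂ)^(-s₁) := by
    rw [show (1:ℂ)-s₁ = 1 + -s₁ by ring, Complex.cpow_add _ _ (hP0 hp), Complex.cpow_one]
  have e3 : (p:ℂ)^(-(s₂+1)) = ((p:ℂ)^(s₂+1))⁻¹ := Complex.cpow_neg _ _
  have hZ0 : (p:ℂ)^(s₂+1) ≠ 0 := by
    intro h; have := normZ hp h2; rw [h, norm_zero] at this; linarith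
  have hz := hZ1 hp h2
  have hp0 := hP0 hp
  have hpm1 : (p:ℂ) - 1 ≠ 0 := by
    intro h
    have h' : (p:ℂ) = 1 := by linear_combination h
    exact hp.one_lt.ne' (Nat.cast_eq_one.mp h')
  have e4 : (1:ℂ) - 1/(p:ℂ) = ((p:ℂ)-1)/(p:ℂ) := by field_simp
  rw [Bp, Ap, e1, e2, e3, e4]
  field_simp
  ring

include h1 h2 in
lemma BpNe : Bp s₁ s₂ p ≠ 0 := by
  rw [BA hp h2]
  exact mul_ne_zero (ApNe hp h1 h2) (hZinv hp h2)

include h1 h2 in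
lemma DA : Dp s₁ p * Ap s₁ s₂ p = Dp s₁ p + Ep s₂ p - 1 := by
  have hw := hWne hp h1
  have hz := hZ1 hp h2
  have hpm := hPm1 hp
  rw [Dp, Ap, Ep]
  field_simp
  ring

end PerPrime

section Phi

variable (s : ℂ) (k : ℕ)

def phiF : ℕ → ℂ :=
  fun n => if 1 ≤ n ∧ n.Coprime k then 1 / ((n.totient : ℂ) * (n:ℂ)^s) else 0

lemma phiF_zero : phiF s k 0 = 0 := by simp [phiF]

lemma phiF_one : phiF s k 1 = 1 := by
  simp [phiF, Nat.coprime_one_left]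

variable {s k}

lemma phiF_mul {m n : ℕ} (h : m.Coprime n) :
    phiF s k (m * n) = phiF s k m * phiF s k n := by
  rcases Nat.eq_zero_or_pos m with hm | hm
  · subst hm; simp [phiF]
  rcases Nat.eq_zero_or_pos n with hn | hn
  · subst hn; simp [phiF]
  by_cases hmk : m.Coprime k
  · by_cases hnk : n.Coprime k
    · have e1 : phiF s k (m*n) = 1 / (((m*n).totient : ℂ) * ((m*n:ℕ):ℂ)^s) := by
        rw [phiF]
        exact if_pos ⟨Nat.one_le_iff_ne_zero.mpr (Nat.mul_ne_zero hm.ne' hn.ne'),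
          Nat.Coprime.mul hmk hnk⟩
      have e2 : phiF s k m = 1 / ((m.totient : ℂ) * ((m:ℕ):ℂ)^s) := by
        rw [phiF]; exact if_pos ⟨hm, hmk⟩
      have e3 : phiF s k n = 1 / ((n.totient : ℂ) * ((n:ℕ):ℂ)^s) := by
        rw [phiF]; exact if_pos ⟨hn, hnk⟩
      rw [e1, e2, e3, Nat.totient_mul h, Nat.cast_mul, Nat.cast_mul,
        Complex.natCast_mul_natCast_cpow, div_mul_div_comm, one_mul]
      ring
    · have e3 : phiF s k n = 0 := by
        rw [phiF]
        exact if_neg (fun hc => hnk hc.2)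
      have e1 : phiF s k (m*n) = 0 := by
        rw [phiF]
        exact if_neg (fun hc => hnk (Nat.Coprime.coprime_dvd_left (dvd_mul_left n m) hc.2))
      rw [e1, e3, mul_zero]
  · have e2 : phiF s k m = 0 := by
      rw [phiF]
      exact if_neg (fun hc => hmk hc.2)
    have e1 : phiF s k (m*n) = 0 := by
      rw [phiF]
      exact if_neg (fun hc => hmk (Nat.Coprime.coprime_dvd_left (dvd_mul_right m n) hc.2))
    rw [e1, e2, zero_mul]

variable (s k)

lemma phiF_norm_le (h2 : 1 < s.re) (n : ℕ) : ‖phiF s k n‖ ≤ (n:ℝ)^(-s.re) := by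
  rcases Nat.eq_zero_or_pos n with hn | hn
  · subst hn
    rw [phiF_zero, norm_zero, Nat.cast_zero, Real.zero_rpow (by linarith)]
  rw [phiF]
  split_ifs with hc
  · rw [norm_div, norm_one, norm_mul, Complex.norm_natCast,
      Complex.norm_natCast_cpow_of_pos hn, Real.rpow_neg (Nat.cast_nonneg n), ← one_div]
    have hphi : (1:ℝ) ≤ (n.totient : ℝ) := by
      exact_mod_cast Nat.one_le_iff_ne_zero.mpr (Nat.totient_pos.mpr hn).ne'
    have hpow : (0:ℝ) < (n:ℝ)^(s.re) := Real.rpow_pos_of_pos (by exact_mod_cast hn) _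
    rw [div_le_div_iff₀ (by positivity) hpow]
    nlinarith
  · rw [norm_zero]
    positivity

lemma phiF_summable (h2 : 1 < s.re) : Summable (fun n => ‖phiF s k n‖) := by
  apply Summable.of_nonneg_of_le (fun _ => norm_nonneg _) (phiF_norm_le s k h2)
  exact Real.summable_nat_rpow.mpr (by linarith)

variable {s k}

lemma natcast_pow_cpow (n e : ℕ) (w : ℂ) : ((n^e : ℕ) : ℂ)^w = (((n:ℕ):ℂ)^w)^e := by
  induction e with
  | zero => simp
  | succ e ih =>
      rw [pow_succ, Nat.cast_mul, Complex.natCast_mul_natCast_cpow, ih, pow_succ]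

lemma tsum_phiF_dvd (hp : p.Prime) (hd : p ∣ k) :
    ∑' e : ℕ, phiF s k (p^e) = 1 := by
  rw [tsum_eq_single 0 ?_]
  · rw [pow_zero, phiF_one]
  · intro e he
    rw [phiF, if_neg]
    rintro ⟨-, hc⟩
    exact (hp.coprime_iff_not_dvd.mp
      (Nat.Coprime.coprime_dvd_left (dvd_pow_self p he) hc)) hd

lemma cpowS_ne (hp : p.Prime) (w : ℂ) : (p:ℂ)^w ≠ 0 := by
  intro h
  have := Complex.norm_natCast_cpow_pos_of_pos hp.pos w
  rw [h, norm_zero] at this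
  linarith

lemma phiF_prime_pow_succ (hp : p.Prime) (hnd : ¬ p ∣ k) (e : ℕ) :
    phiF s k (p^(e+1)) = ((p:ℂ)/((p:ℂ)-1)) * ((p:ℂ)^(-(s+1)))^(e+1) := by
  have hpm1 : (p:ℂ) - 1 ≠ 0 := by
    intro h
    have h' : (p:ℂ) = 1 := by linear_combination h
    exact hp.one_lt.ne' (Nat.cast_eq_one.mp h')
  have hp0 := hP0 hp
  have hps := cpowS_ne hp s
  rw [phiF, if_pos ⟨Nat.one_le_iff_ne_zero.mpr (pow_ne_zero _ hp.pos.ne'), 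
    Nat.Coprime.pow_left _ (hp.coprime_iff_not_dvd.mpr hnd)⟩]
  rw [Nat.totient_prime_pow hp (Nat.succ_pos e)]
  have hcast : ((p ^ (e + 1 - 1) * (p - 1) : ℕ) : ℂ) = (p:ℂ)^e * ((p:ℂ) - 1) := by
    push_cast [Nat.cast_sub hp.one_lt.le]
    norm_num
  rw [hcast, natcast_pow_cpow]
  have hx : (p:ℂ)^(-(s+1)) = ((p:ℂ)^s * (p:ℂ))⁻¹ := by
    rw [Complex.cpow_neg, Complex.cpow_add _ _ hp0, Complex.cpow_one]
  rw [hx]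
  field_simp
  rw [← pow_succ, ← mul_pow, ← mul_pow, mul_one_div_cancel (mul_ne_zero hp0 hps), one_pow]

lemma norm_x_lt (hp : p.Prime) (h2 : 1 < s.re) : ‖(p:ℂ)^(-(s+1))‖ < 1 := by
  rw [Complex.norm_natCast_cpow_of_pos hp.pos]
  apply Real.rpow_lt_one_of_one_lt_of_neg (hp1R hp)
  simp only [neg_re, add_re, one_re]
  linarith

lemma tsum_phiF_not_dvd (hp : p.Prime) (h2 : 1 < s.re) (hnd : ¬ p ∣ k) :
    ∑' e : ℕ, phiF s k (p^e) = Ep s p := by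
  have hsum : Summable (fun e : ℕ => phiF s k (p ^ e)) :=
    ((phiF_summable s k h2).of_norm).comp_injective (Nat.pow_right_injective hp.one_lt)
  rw [Summable.tsum_eq_zero_add hsum, pow_zero, phiF_one]
  have hx := norm_x_lt hp h2
  set x := (p:ℂ)^(-(s+1)) with hxdef
  have h3 : ∑' e : ℕ, phiF s k (p^(e+1))
      = ((p:ℂ)/((p:ℂ)-1)) * (x * (1-x)⁻¹) := by
    rw [tsum_congr (phiF_prime_pow_succ hp hnd)]
    rw [tsum_mul_left]
    congr 1
    have : ∀ e : ℕ, x ^ (e+1) = x * x ^ e := fun e => pow_succ' x e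
    rw [tsum_congr this, tsum_mul_left, tsum_geometric_of_norm_lt_one hx]
  rw [h3]
  have hxz : x = ((p:ℂ)^(s+1))⁻¹ := Complex.cpow_neg _ _
  have hZ0 := cpowS_ne hp (s+1)
  have hz := hZ1 hp h2
  have hpm := hPm1 hp
  have hpm1 : (p:ℂ) - 1 ≠ 0 := by
    intro h
    have h' : (p:ℂ) = 1 := by linear_combination h
    exact hp.one_lt.ne' (Nat.cast_eq_one.mp h')
  have hp0 := hP0 hp
  have h1x : (1:ℂ) - x ≠ 0 := by
    rw [hxz]
    have := hZinv hp h2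
    rwa [Complex.cpow_neg] at this
  rw [Ep, hxz]
  rw [hxz] at h1x
  field_simp

lemma hasProd_phiF (h2 : 1 < s.re) :
    HasProd (fun p : Nat.Primes => if (p:ℕ) ∣ k then 1 else Ep s (p:ℕ))
      (∑' n, phiF s k n) := by
  have hmul : ∀ {m n : ℕ}, m.Coprime n → phiF s k (m*n) = phiF s k m * phiF s k n :=
    fun h => phiF_mul h
  have H := EulerProduct.eulerProduct_hasProd (f := phiF s k) (phiF_one s k) hmul
    (phiF_summable s k h2) (phiF_zero s k)
  have hfun : (fun p : Nat.Primes => if (p:ℕ) ∣ k then 1 else Ep s (p:ℕ))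
      = fun p : Nat.Primes => ∑' e : ℕ, phiF s k ((p:ℕ)^e) := by
    funext p
    by_cases hd : (p:ℕ) ∣ k
    · rw [if_pos hd, tsum_phiF_dvd p.prop hd]
    · rw [if_neg hd, tsum_phiF_not_dvd p.prop h2 hd]
  rw [hfun]
  exact H

end Phi

section Split

variable {y : ℝ} {s₁ s₂ : ℂ}

lemma prime_le_iff (hy0 : 0 ≤ y) {p : ℕ} : (p:ℝ) ≤ y ↔ p < ⌊y⌋₊ + 1 := by
  rw [Nat.lt_succ_iff, Nat.le_floor_iff hy0]

lemma mem_primesBelow_iff (hy0 : 0 ≤ y) {p : ℕ} :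
    p ∈ Nat.primesBelow (⌊y⌋₊ + 1) ↔ p.Prime ∧ (p:ℝ) ≤ y := by
  rw [Nat.mem_primesBelow, prime_le_iff hy0, and_comm]

lemma smooth_iff (hy : 1 ≤ y) (n : ℕ) :
    (1 ≤ n ∧ (Pmax n : ℝ) ≤ y) ↔ n ∈ Nat.smoothNumbers (⌊y⌋₊ + 1) := by
  have hy0 : (0:ℝ) ≤ y := by linarith
  constructor
  · rintro ⟨hn1, hnP⟩
    refine Nat.mem_smoothNumbers'.mpr (fun p hp hpd => ?_)
    have hmem : p ∈ n.primeFactors :=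
      Nat.mem_primeFactors.mpr ⟨hp, hpd, by omega⟩
    have h1 : p ≤ Pmax n :=
      le_trans (Finset.le_sup (f := id) hmem) (le_max_right _ _)
    have h2 : (p:ℝ) ≤ y := le_trans (by exact_mod_cast h1) hnP
    exact (prime_le_iff hy0).mp h2
  · intro hn
    have hn0 : n ≠ 0 := (Nat.mem_smoothNumbers.mp hn).1
    refine ⟨Nat.one_le_iff_ne_zero.mpr hn0, ?_⟩
    have hS : n.primeFactors.sup id ≤ ⌊y⌋₊ := by
      apply Finset.sup_le
      intro p hpmem
      obtain ⟨hp, hpd, -⟩ := Nat.mem_primeFactors.mp hpmem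
      have := Nat.mem_smoothNumbers'.mp hn p hp hpd
      simp only [id_eq]
      omega
    have h1f : 1 ≤ ⌊y⌋₊ := Nat.le_floor (by exact_mod_cast hy)
    have : Pmax n ≤ ⌊y⌋₊ := max_le h1f hS
    exact (Nat.le_floor_iff hy0).mp this

def zf (s₁ : ℂ) : ℕ →* ℂ where
  toFun := fun n => (n:ℂ)^(-s₁)
  map_one' := by simp
  map_mul' := fun m n => by
    show ((m*n : ℕ):ℂ)^(-s₁) = ((m:ℕ):ℂ)^(-s₁) * ((n:ℕ):ℂ)^(-s₁)
    rw [Nat.cast_mul]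
    exact Complex.natCast_mul_natCast_cpow m n _

lemma zetaY_eq (hy : 1 ≤ y) (h1 : 0 < s₁.re) :
    zetaY s₁ y = ∏ p ∈ Nat.primesBelow (⌊y⌋₊ + 1), Dp s₁ p := by
  rw [zetaY]
  have hgeom := EulerProduct.summable_and_hasSum_smoothNumbers_prod_primesBelow_geometric
    (f := zf s₁) (fun {p} hp => normW hp h1) (⌊y⌋₊ + 1)
  have hs := hgeom.2
  have h4 : ∀ n : ℕ, (if 1 ≤ n ∧ (Pmax n : ℝ) ≤ y then (n:ℂ)^(-s₁) else 0)
      = Set.indicator (Nat.smoothNumbers (⌊y⌋₊ + 1)) (fun n : ℕ => (n:ℂ)^(-s₁)) n := by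
    intro n
    rw [Set.indicator_apply]
    exact if_congr (smooth_iff hy n) rfl rfl
  rw [tsum_congr h4, ← _root_.tsum_subtype]
  exact hs.tsum_eq

lemma Phi2_split (h2 : 1 < s₂.re) (hy : 1 ≤ y) (m : ℤ) (hm : m ≠ 0)
    (hmy : ∀ p : ℕ, p.Prime → p ∣ m.natAbs → (p:ℝ) ≤ y) :
    Phi2 s₂ m = (∏' p : Nat.Primes, if y < ((p:ℕ):ℝ) then Ep s₂ (p:ℕ) else 1)
      * ∏ p ∈ Nat.primesBelow (⌊y⌋₊ + 1), (if p ∣ m.natAbs then 1 else Ep s₂ p) := by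
  have hy0 : (0:ℝ) ≤ y := by linarith
  set Y := ⌊y⌋₊ + 1 with hY
  set g : Nat.Primes → ℂ := fun p => if (p:ℕ) ∣ m.natAbs then 1 else Ep s₂ (p:ℕ) with hgdef
  set t : Nat.Primes → ℂ := fun p => if y < ((p:ℕ):ℝ) then Ep s₂ (p:ℕ) else 1 with htdef
  set u : Nat.Primes → ℂ := fun p => if ((p:ℕ):ℝ) ≤ y then g p else 1 with hudef
  have hg : HasProd g (Phi2 s₂ m) := hasProd_phiF (k := m.natAbs) h2
  have hgu : ∀ p, g p = t p * u p := by
    intro p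
    by_cases hpy : ((p:ℕ):ℝ) ≤ y
    · rw [htdef, hudef]
      simp only [if_pos hpy, if_neg (not_lt.mpr hpy), one_mul]
    · have hnd : ¬ (p:ℕ) ∣ m.natAbs := fun hd => hpy (hmy _ p.prop hd)
      rw [htdef, hudef, hgdef]
      simp only [if_neg hpy, if_pos (lt_of_not_ge hpy), if_neg hnd, mul_one]
  have hune : ∀ p, u p ≠ 0 := by
    intro p
    rw [hudef]
    dsimp only
    split_ifs with h
    · rw [hgdef]
      dsimp only
      split_ifs with h'
      · exact one_ne_zero
      · exact EpNe p.prop h2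
    · exact one_ne_zero
  set S : Finset Nat.Primes := (Nat.primesBelow Y).subtype Nat.Prime with hS
  have hmemS : ∀ p : Nat.Primes, p ∈ S ↔ (p:ℕ) ∈ Nat.primesBelow Y := by
    intro p
    exact Finset.mem_subtype
  have hout : ∀ p : Nat.Primes, p ∉ S → ((p:ℕ):ℝ) > y := by
    intro p hp
    rw [hmemS p, mem_primesBelow_iff hy0] at hp
    push_neg at hp
    exact hp p.prop
  have hu : HasProd u (∏ p ∈ S, u p) := by
    apply hasProd_prod_of_ne_finset_one
    intro p hp
    rw [hudef]
    exact if_neg (not_le.mpr (hout p hp))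
  have huinv : HasProd (fun p => (u p)⁻¹) (∏ p ∈ S, (u p)⁻¹) := by
    apply hasProd_prod_of_ne_finset_one
    intro p hp
    rw [hudef]
    dsimp only
    rw [if_neg (not_le.mpr (hout p hp)), inv_one]
  have ht : HasProd t (Phi2 s₂ m * ∏ p ∈ S, (u p)⁻¹) := by
    have h' := hg.mul huinv
    have heq : (fun p => g p * (u p)⁻¹) = t := by
      funext p
      rw [hgu p, mul_inv_cancel_right₀ (hune p)]
    rwa [heq] at h'
  have htp : (∏' p : Nat.Primes, if y < ((p:ℕ):ℝ) then Ep s₂ (p:ℕ) else 1)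
      = Phi2 s₂ m * ∏ p ∈ S, (u p)⁻¹ := ht.tprod_eq
  have hSprod : (∏ p ∈ S, (u p)⁻¹) * (∏ p ∈ S, u p) = 1 := by
    rw [← Finset.prod_mul_distrib]
    rw [Finset.prod_congr rfl (fun p _ => inv_mul_cancel₀ (hune p))]
    exact Finset.prod_const_one
  have hmain : Phi2 s₂ m
      = (∏' p : Nat.Primes, if y < ((p:ℕ):ℝ) then Ep s₂ (p:ℕ) else 1) * ∏ p ∈ S, u p := by
    rw [htp, mul_assoc, hSprod, mul_one]
  rw [hmain]
  congr 1
  have hfil : (Nat.primesBelow Y).filter Nat.Prime = Nat.primesBelow Y :=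
    Finset.filter_true_of_mem (fun p hp => Nat.prime_of_mem_primesBelow hp)
  calc ∏ p ∈ S, u p
      = ∏ p ∈ (Nat.primesBelow Y).filter Nat.Prime,
          (if (p:ℝ) ≤ y then (if p ∣ m.natAbs then 1 else Ep s₂ p) else 1) := by
        have he : ∏ p ∈ S, u p = ∏ p ∈ S,
            (fun q : ℕ => if (q:ℝ) ≤ y then (if q ∣ m.natAbs then 1 else Ep s₂ q) else 1)
              (↑p : ℕ) :=
          Finset.prod_congr rfl (fun p _ => rfl)
        rw [he, hS]
        exact Finset.prod_subtype_eq_prod_filter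
          (fun q : ℕ => if (q:ℝ) ≤ y then (if q ∣ m.natAbs then 1 else Ep s₂ q) else 1)
          (p := Nat.Prime)
    _ = ∏ p ∈ Nat.primesBelow Y, (if p ∣ m.natAbs then 1 else Ep s₂ p) := by
        rw [hfil]
        apply Finset.prod_congr rfl
        intro p hp
        rw [if_pos ((mem_primesBelow_iff hy0).mp hp).2]

end Split

section FF

variable (s₁ s₂ : ℂ) (y : ℝ) (k : ℕ)

/-- finset of primes below y not dividing k -/
def Qf : Finset ℕ := (Nat.primesBelow (⌊y⌋₊ + 1)).filter (fun q => ¬ q ∣ k)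

lemma mem_Qf {q : ℕ} : q ∈ Qf y k ↔ q ∈ Nat.primesBelow (⌊y⌋₊ + 1) ∧ ¬ q ∣ k :=
  Finset.mem_filter

def ff : ℕ → ℂ := fun n =>
  (n:ℂ)^(-s₁) * ∏ q ∈ Qf y k, (if q ∣ n then (Ep s₂ q)⁻¹ else 1)

variable {s₁ s₂ y k}

lemma ff_zero (h1 : 0 < s₁.re) : ff s₁ s₂ y k 0 = 0 := by
  have hs : -s₁ ≠ 0 := by
    intro h
    have : s₁.re = 0 := by
      have := congrArg Complex.re h
      simp at this
      simpa using this
    linarith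
  rw [ff, Nat.cast_zero, Complex.zero_cpow hs, zero_mul]

lemma ff_one : ff s₁ s₂ y k 1 = 1 := by
  rw [ff, Nat.cast_one, Complex.one_cpow, one_mul]
  apply Finset.prod_eq_one
  intro q hq
  have hqp : q.Prime := Nat.prime_of_mem_primesBelow (Finset.mem_filter.mp hq).1
  rw [if_neg (Nat.Prime.not_dvd_one hqp)]

lemma ff_mul (h1 : 0 < s₁.re) {m n : ℕ} (h : m.Coprime n) :
    ff s₁ s₂ y k (m * n) = ff s₁ s₂ y k m * ff s₁ s₂ y k n := by
  rcases Nat.eq_zero_or_pos m with hm | hm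
  · subst hm; rw [zero_mul, ff_zero h1, zero_mul]
  rcases Nat.eq_zero_or_pos n with hn | hn
  · subst hn; rw [mul_zero, ff_zero h1, mul_zero]
  rw [ff, ff, ff]
  have hc : ((m*n : ℕ):ℂ)^(-s₁) = ((m:ℕ):ℂ)^(-s₁) * ((n:ℕ):ℂ)^(-s₁) := by
    rw [Nat.cast_mul]
    exact Complex.natCast_mul_natCast_cpow m n _
  rw [hc]
  have hprod : ∏ q ∈ Qf y k, (if q ∣ m * n then (Ep s₂ q)⁻¹ else 1)
      = ∏ q ∈ Qf y k, ((if q ∣ m then (Ep s₂ q)⁻¹ else 1) * (if q ∣ n then (Ep s₂ q)⁻¹ else 1)) := by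
    apply Finset.prod_congr rfl
    intro q hq
    have hqp : q.Prime := Nat.prime_of_mem_primesBelow (Finset.mem_filter.mp hq).1
    by_cases hqm : q ∣ m
    · have hqn : ¬ q ∣ n := by
        intro hqn
        have : q ∣ Nat.gcd m n := Nat.dvd_gcd hqm hqn
        rw [h] at this
        exact hqp.one_lt.ne' (Nat.eq_one_of_dvd_one this)
      rw [if_pos (hqm.mul_right n), if_pos hqm, if_neg hqn, mul_one]
    · by_cases hqn : q ∣ n
      · rw [if_pos (hqn.mul_left m), if_neg hqm, if_pos hqn, one_mul]
      · rw [if_neg (fun hd => ((hqp.dvd_mul).mp hd).elim hqm hqn), if_neg hqm, if_neg hqn,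
          one_mul]
  rw [hprod, Finset.prod_mul_distrib]
  ring

lemma ff_prime_pow_succ {p : ℕ} (hp : p.Prime) (e : ℕ) :
    ff s₁ s₂ y k (p^(e+1))
      = (if p ∈ Qf y k then (Ep s₂ p)⁻¹ else 1) * ((p:ℂ)^(-s₁))^(e+1) := by
  rw [ff, natcast_pow_cpow]
  have hprod : ∏ q ∈ Qf y k, (if q ∣ p^(e+1) then (Ep s₂ q)⁻¹ else 1)
      = ∏ q ∈ Qf y k, (if q = p then (Ep s₂ q)⁻¹ else 1) := by
    apply Finset.prod_congr rfl
    intro q hq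
    have hqp : q.Prime := Nat.prime_of_mem_primesBelow (Finset.mem_filter.mp hq).1
    congr 1
    apply propext
    constructor
    · intro hd
      exact (Nat.prime_dvd_prime_iff_eq hqp hp).mp (hqp.dvd_of_dvd_pow hd)
    · rintro rfl
      exact dvd_pow_self q (Nat.succ_ne_zero e)
  rw [hprod, Finset.prod_ite_eq' (Qf y k) p (fun q => (Ep s₂ q)⁻¹)]
  ring

lemma geom_shift {x : ℂ} (hx : ‖x‖ < 1) : ∑' e : ℕ, x^(e+1) = (1-x)⁻¹ - 1 := by
  have h1x : (1:ℂ) - x ≠ 0 := by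
    intro h
    have h' : x = 1 := (sub_eq_zero.mp h).symm
    rw [h', norm_one] at hx
    linarith
  have : ∀ e : ℕ, x ^ (e+1) = x * x ^ e := fun e => pow_succ' x e
  rw [tsum_congr this, tsum_mul_left, tsum_geometric_of_norm_lt_one hx]
  field_simp
  ring

lemma ff_tsum_prime {p : ℕ} (hp : p.Prime) (h1 : 0 < s₁.re) :
    ∑' e : ℕ, ff s₁ s₂ y k (p^e)
      = 1 + (if p ∈ Qf y k then (Ep s₂ p)⁻¹ else 1) * (Dp s₁ p - 1) := by
  have hx := normW hp h1
  have hsum1 : Summable (fun e : ℕ => ff s₁ s₂ y k (p^(e+1))) := by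
    rw [show (fun e : ℕ => ff s₁ s₂ y k (p^(e+1)))
      = fun e : ℕ => (if p ∈ Qf y k then (Ep s₂ p)⁻¹ else 1) * ((p:ℂ)^(-s₁))^(e+1)
      from funext (ff_prime_pow_succ hp)]
    apply Summable.mul_left
    have hg : Summable (fun e : ℕ => ((p:ℂ)^(-s₁))^e) := summable_geometric_of_norm_lt_one hx
    rw [show (fun e : ℕ => ((p:ℂ)^(-s₁))^(e+1))
      = fun e : ℕ => (p:ℂ)^(-s₁) * ((p:ℂ)^(-s₁))^e from funext (fun e => pow_succ' _ e)]
    exact hg.mul_left _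
  have hsum : Summable (fun e : ℕ => ff s₁ s₂ y k (p^e)) := (summable_nat_add_iff 1).mp hsum1
  rw [Summable.tsum_eq_zero_add hsum, pow_zero, ff_one]
  congr 1
  rw [tsum_congr (ff_prime_pow_succ hp), tsum_mul_left, geom_shift hx, Dp]

def Gp (s₁ s₂ : ℂ) (k p : ℕ) : ℂ :=
  if p ∣ k then Dp s₁ p else Dp s₁ p + Ep s₂ p - 1

lemma ff_combine {p : ℕ} (hp : p.Prime) (h1 : 0 < s₁.re) (h2 : 1 < s₂.re)
    (hpb : p ∈ Nat.primesBelow (⌊y⌋₊ + 1)) :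
    (if p ∣ k then 1 else Ep s₂ p) * (∑' e : ℕ, ff s₁ s₂ y k (p^e)) = Gp s₁ s₂ k p := by
  rw [ff_tsum_prime hp h1, Gp]
  by_cases hd : p ∣ k
  · rw [if_pos hd, if_pos hd, if_neg (fun hq => ((mem_Qf (y := y) (k := k)).mp hq).2 hd),
      one_mul, one_mul]
    ring
  · rw [if_neg hd, if_neg hd, if_pos ((mem_Qf (y := y) (k := k)).mpr ⟨hpb, hd⟩)]
    have hE := EpNe hp h2
    field_simp
    ring

lemma ff_norm_summable {p : ℕ} (hp : p.Prime) (h1 : 0 < s₁.re) :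
    Summable (fun e : ℕ => ‖ff s₁ s₂ y k (p^e)‖) := by
  apply (summable_nat_add_iff 1).mp
  have hx := normW hp h1
  have he : (fun e : ℕ => ‖ff s₁ s₂ y k (p^(e+1))‖)
      = fun e : ℕ => ‖if p ∈ Qf y k then (Ep s₂ p)⁻¹ else 1‖ * (‖(p:ℂ)^(-s₁)‖ * ‖(p:ℂ)^(-s₁)‖^e) := by
    funext e
    rw [ff_prime_pow_succ hp, norm_mul, norm_pow, pow_succ']
  rw [he]
  exact ((summable_geometric_of_lt_one (norm_nonneg _) hx).mul_left _).mul_left _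

lemma ff_hasSum (h1 : 0 < s₁.re) :
    HasSum (fun m : Nat.smoothNumbers (⌊y⌋₊ + 1) => ff s₁ s₂ y k (m:ℕ))
      (∏ p ∈ Nat.primesBelow (⌊y⌋₊ + 1), ∑' e : ℕ, ff s₁ s₂ y k (p^e)) :=
  (EulerProduct.summable_and_hasSum_smoothNumbers_prod_primesBelow_tsum
    ff_one (fun {m n} h => ff_mul h1 h) (fun {p} hp => ff_norm_summable hp h1) _).2

end FF

section Main

variable {y : ℝ} {s₁ s₂ : ℂ} {a : ℤ}

lemma T2_eq (hy0 : (0:ℝ) ≤ y) :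
    (∏' p : Nat.Primes, if ((p:ℕ):ℝ) ≤ y then Ap s₁ s₂ (p:ℕ) else 1)
      = ∏ p ∈ Nat.primesBelow (⌊y⌋₊ + 1), Ap s₁ s₂ p := by
  have hout : ∀ p : Nat.Primes, p ∉ (Nat.primesBelow (⌊y⌋₊ + 1)).subtype Nat.Prime →
      (if ((p:ℕ):ℝ) ≤ y then Ap s₁ s₂ (p:ℕ) else 1) = 1 := by
    intro p hp
    replace hp : ¬ ((p:ℕ) ∈ Nat.primesBelow (⌊y⌋₊ + 1)) := fun h => hp (Finset.mem_subtype.mpr h)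
    have hlt : ¬ (p:ℕ) < ⌊y⌋₊ + 1 := fun hlt =>
      hp (Nat.mem_primesBelow.mpr ⟨hlt, p.prop⟩)
    exact if_neg (fun hle => hlt ((prime_le_iff hy0).mp hle))
  calc (∏' p : Nat.Primes, if ((p:ℕ):ℝ) ≤ y then Ap s₁ s₂ (p:ℕ) else 1)
      = ∏ p ∈ (Nat.primesBelow (⌊y⌋₊ + 1)).subtype Nat.Prime,
          (if ((p:ℕ):ℝ) ≤ y then Ap s₁ s₂ (p:ℕ) else 1) := tprod_eq_prod hout
    _ = ∏ p ∈ (Nat.primesBelow (⌊y⌋₊ + 1)).subtype Nat.Prime,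
          (fun q : ℕ => if (q:ℝ) ≤ y then Ap s₁ s₂ q else 1) (↑p : ℕ) :=
        Finset.prod_congr rfl (fun p _ => rfl)
    _ = ∏ p ∈ (Nat.primesBelow (⌊y⌋₊ + 1)).filter Nat.Prime,
          (if (p:ℝ) ≤ y then Ap s₁ s₂ p else 1) :=
        Finset.prod_subtype_eq_prod_filter
          (fun q : ℕ => if (q:ℝ) ≤ y then Ap s₁ s₂ q else 1) (p := Nat.Prime)
    _ = ∏ p ∈ Nat.primesBelow (⌊y⌋₊ + 1), (if (p:ℝ) ≤ y then Ap s₁ s₂ p else 1) := by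
        rw [Finset.filter_true_of_mem (fun p hp => Nat.prime_of_mem_primesBelow hp)]
    _ = ∏ p ∈ Nat.primesBelow (⌊y⌋₊ + 1), Ap s₁ s₂ p :=
        Finset.prod_congr rfl
          (fun p hp => if_pos ((mem_primesBelow_iff hy0).mp hp).2)

lemma lhs_eq (ha : a ≠ 0) (hay : (a.natAbs : ℝ) ≤ y) (h1 : 0 < s₁.re) (h2 : 1 < s₂.re) :
    Fa a s₁ s₂ y = (∏' p : Nat.Primes, if y < ((p:ℕ):ℝ) then Ep s₂ (p:ℕ) else 1)
      * ∏ p ∈ Nat.primesBelow (⌊y⌋₊ + 1), Gp s₁ s₂ a.natAbs p := by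
  have hk0 : a.natAbs ≠ 0 := Int.natAbs_ne_zero.mpr ha
  have hy : (1:ℝ) ≤ y :=
    le_trans (by exact_mod_cast Nat.one_le_iff_ne_zero.mpr hk0) hay
  have hy0 : (0:ℝ) ≤ y := by linarith
  have hPBp : ∀ p ∈ Nat.primesBelow (⌊y⌋₊ + 1), p.Prime :=
    fun p hp => Nat.prime_of_mem_primesBelow hp
  have hterm : ∀ n : ℕ,
      (if 1 ≤ n ∧ (Pmax n : ℝ) ≤ y then (n:ℂ)^(-s₁) * Phi2 s₂ (a * n) else 0)
      = (∏' p : Nat.Primes, if y < ((p:ℕ):ℝ) then Ep s₂ (p:ℕ) else 1) *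
          ((∏ p ∈ Nat.primesBelow (⌊y⌋₊ + 1), (if p ∣ a.natAbs then 1 else Ep s₂ p)) *
            Set.indicator (Nat.smoothNumbers (⌊y⌋₊ + 1)) (ff s₁ s₂ y a.natAbs) n) := by
    intro n
    by_cases hn : n ∈ Nat.smoothNumbers (⌊y⌋₊ + 1)
    · rw [if_pos ((smooth_iff hy n).mpr hn), Set.indicator_of_mem hn]
      have hn1 : n ≠ 0 := (Nat.mem_smoothNumbers.mp hn).1
      have hna : (a * (n:ℤ)).natAbs = a.natAbs * n := by
        rw [Int.natAbs_mul, Int.natAbs_natCast]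
      have hmy : ∀ p : ℕ, p.Prime → p ∣ (a * (n:ℤ)).natAbs → (p:ℝ) ≤ y := by
        intro p hpp hpd
        rw [hna] at hpd
        rcases hpp.dvd_mul.mp hpd with hdk | hdn
        · exact le_trans
            (by exact_mod_cast Nat.le_of_dvd (Nat.pos_of_ne_zero hk0) hdk) hay
        · have := Nat.mem_smoothNumbers'.mp hn p hpp hdn
          exact (prime_le_iff hy0).mpr this
      have hsplit := Phi2_split h2 hy (a * n)
        (mul_ne_zero ha (Int.natCast_ne_zero.mpr hn1)) hmy
      rw [hsplit, hna]
      have hcomb : (∏ p ∈ Nat.primesBelow (⌊y⌋₊ + 1), (if p ∣ a.natAbs then 1 else Ep s₂ p))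
            * ((n:ℂ)^(-s₁) * ∏ q ∈ Qf y a.natAbs, (if q ∣ n then (Ep s₂ q)⁻¹ else 1))
          = (n:ℂ)^(-s₁) * ∏ p ∈ Nat.primesBelow (⌊y⌋₊ + 1),
              (if p ∣ a.natAbs * n then 1 else Ep s₂ p) := by
        have hq : ∏ q ∈ Qf y a.natAbs, (if q ∣ n then (Ep s₂ q)⁻¹ else 1)
            = ∏ p ∈ Nat.primesBelow (⌊y⌋₊ + 1),
                (if ¬ p ∣ a.natAbs then (if p ∣ n then (Ep s₂ p)⁻¹ else 1) else 1) :=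
          Finset.prod_filter _ _
        rw [hq, mul_left_comm, ← Finset.prod_mul_distrib]
        congr 1
        apply Finset.prod_congr rfl
        intro p hp
        have hpp := hPBp p hp
        by_cases hdk : p ∣ a.natAbs
        · rw [if_pos hdk, if_neg (not_not_intro hdk), if_pos (hdk.mul_right n), one_mul]
        · rw [if_neg hdk, if_pos hdk]
          by_cases hdn : p ∣ n
          · rw [if_pos hdn, if_pos (hdn.mul_left a.natAbs),
              mul_inv_cancel₀ (EpNe hpp h2)]
          · rw [if_neg hdn, if_neg (fun hd => (hpp.dvd_mul.mp hd).elim hdk hdn), mul_one]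
      rw [ff, hcomb]
      ring
    · rw [if_neg (fun hc => hn ((smooth_iff hy n).mp hc)),
        Set.indicator_of_notMem hn, mul_zero, mul_zero]
  rw [Fa, tsum_congr hterm, tsum_mul_left, tsum_mul_left, ← _root_.tsum_subtype,
    (ff_hasSum (s₂ := s₂) (y := y) (k := a.natAbs) h1).tsum_eq]
  congr 1
  rw [← Finset.prod_mul_distrib]
  apply Finset.prod_congr rfl
  intro p hp
  exact ff_combine (hPBp p hp) h1 h2 hp

lemma rhs_eq (ha : a ≠ 0) (hay : (a.natAbs : ℝ) ≤ y) (h1 : 0 < s₁.re) (h2 : 1 < s₂.re) :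
    F1 s₁ s₂ y * psi2 s₁ s₂ a
      = (∏' p : Nat.Primes, if y < ((p:ℕ):ℝ) then Ep s₂ (p:ℕ) else 1)
        * ∏ p ∈ Nat.primesBelow (⌊y⌋₊ + 1), Gp s₁ s₂ a.natAbs p := by
  have hk0 : a.natAbs ≠ 0 := Int.natAbs_ne_zero.mpr ha
  have hy : (1:ℝ) ≤ y :=
    le_trans (by exact_mod_cast Nat.one_le_iff_ne_zero.mpr hk0) hay
  have hy0 : (0:ℝ) ≤ y := by linarith
  have hPBp : ∀ p ∈ Nat.primesBelow (⌊y⌋₊ + 1), p.Prime :=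
    fun p hp => Nat.prime_of_mem_primesBelow hp
  have hF1 : F1 s₁ s₂ y = zetaY s₁ y
      * (∏' p : Nat.Primes, if y < ((p:ℕ):ℝ) then Ep s₂ (p:ℕ) else 1)
      * (∏' p : Nat.Primes, if ((p:ℕ):ℝ) ≤ y then Ap s₁ s₂ (p:ℕ) else 1) := rfl
  have hpsi : psi2 s₁ s₂ a = ∏ p ∈ a.natAbs.primeFactors, (Ap s₁ s₂ p)⁻¹ := by
    rw [psi2, gI, ← Finset.prod_mul_distrib]
    apply Finset.prod_congr rfl
    intro p hp
    have hpp := Nat.prime_of_mem_primeFactors hp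
    have hz := hZinv hpp h2
    rw [show (1 + (1 - (p:ℂ)^((1:ℂ)-s₁)) / ((1 - 1/(p:ℂ)) * (p:ℂ)^(s₂+2)))
        = Bp s₁ s₂ p from rfl, BA hpp h2, mul_inv, mul_comm ((Ap s₁ s₂ p)⁻¹) _,
      ← mul_assoc, mul_inv_cancel₀ hz, one_mul]
  have hsub : a.natAbs.primeFactors ⊆ Nat.primesBelow (⌊y⌋₊ + 1) := by
    intro p hp
    obtain ⟨hpp, hpd, -⟩ := Nat.mem_primeFactors.mp hp
    have hple : (p:ℝ) ≤ y := le_trans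
      (by exact_mod_cast Nat.le_of_dvd (Nat.pos_of_ne_zero hk0) hpd) hay
    exact (mem_primesBelow_iff hy0).mpr ⟨hpp, hple⟩
  have hext : ∏ p ∈ a.natAbs.primeFactors, (Ap s₁ s₂ p)⁻¹
      = ∏ p ∈ Nat.primesBelow (⌊y⌋₊ + 1), (if p ∣ a.natAbs then (Ap s₁ s₂ p)⁻¹ else 1) :=
    calc ∏ p ∈ a.natAbs.primeFactors, (Ap s₁ s₂ p)⁻¹
        = ∏ p ∈ a.natAbs.primeFactors, (if p ∣ a.natAbs then (Ap s₁ s₂ p)⁻¹ else 1) :=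
          Finset.prod_congr rfl
            (fun p hp => (if_pos (Nat.mem_primeFactors.mp hp).2.1).symm)
      _ = ∏ p ∈ Nat.primesBelow (⌊y⌋₊ + 1), (if p ∣ a.natAbs then (Ap s₁ s₂ p)⁻¹ else 1) :=
          Finset.prod_subset hsub (fun p hp hnp => by
            rw [if_neg]
            intro hdk
            exact hnp (Nat.mem_primeFactors.mpr ⟨hPBp p hp, hdk, hk0⟩))
  have hprod : (∏ p ∈ Nat.primesBelow (⌊y⌋₊ + 1), Dp s₁ p)
      * ((∏ p ∈ Nat.primesBelow (⌊y⌋₊ + 1), Ap s₁ s₂ p)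
      * (∏ p ∈ Nat.primesBelow (⌊y⌋₊ + 1), (if p ∣ a.natAbs then (Ap s₁ s₂ p)⁻¹ else 1)))
      = ∏ p ∈ Nat.primesBelow (⌊y⌋₊ + 1), Gp s₁ s₂ a.natAbs p := by
    rw [← Finset.prod_mul_distrib, ← Finset.prod_mul_distrib]
    apply Finset.prod_congr rfl
    intro p hp
    have hpp := hPBp p hp
    rw [← mul_assoc, Gp]
    by_cases hdk : p ∣ a.natAbs
    · rw [if_pos hdk, if_pos hdk, mul_assoc,
        mul_inv_cancel₀ (ApNe hpp h1 h2), mul_one]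
    · rw [if_neg hdk, if_neg hdk, mul_one, DA hpp h1 h2]
  rw [hF1, zetaY_eq hy h1, hpsi, hext, T2_eq hy0, ← hprod]
  ring

end Main
end Stmt9


open Stmt9 in
/-- factorization of F_a. -/
theorem stmt9 (y : ℝ) (a : ℤ) (ha : a ≠ 0) (hay : (a.natAbs : ℝ) ≤ y)
    (s₁ s₂ : ℂ) (h1 : 0 < s₁.re) (h2 : 1 < s₂.re) :
    Fa a s₁ s₂ y = F1 s₁ s₂ y * psi2 s₁ s₂ a := by
  rw [lhs_eq ha hay h1 h2, rhs_eq ha hay h1 h2]
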